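/- Let d ≥ 1 be an integer, ε > 0, and δ ∈ (0, e^{−ε/2}]. Set σ² = 4d·ln(1/δ)/ε². The mechanism M : ({0,1}^d)^* → ℤ^d defined by M(x) = sum(x) + Y, where Y ∈ ℤ^d has coordinates independently distributed as the discrete Gaussian N_ℤ(σ²), is (ε, δ)-differentially private with respect to insert-delete adjacency. -/

import Mathlib

open scoped ENNReal

/-- `rdown k z` rounds the integer `z` down to the nearest multiple of `k`. -/
def rdown (k : ℕ) (z : ℤ) : ℤ := z - z % (k : ℤ)

/-- Insert-delete adjacency on databases: `x'` is obtained from `x` by inserting or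
deleting exactly one entry. -/
def Adjacent {α : Type*} (x x' : List α) : Prop :=
  (∃ a l₁ l₂, x = l₁ ++ l₂ ∧ x' = l₁ ++ a :: l₂) ∨
  (∃ a l₁ l₂, x' = l₁ ++ l₂ ∧ x = l₁ ++ a :: l₂)

/-- The coordinatewise sum of the entries of a database `x ∈ ({0,1}^d)^*`. -/
def dbSum {d : ℕ} (x : List (Fin d → Bool)) (i : Fin d) : ℤ :=
  (x.map fun row => if row i then (1 : ℤ) else 0).sum

/-- `(ε, δ)`-differential privacy of a mechanism `M` with respect to an adjacency
relation `Adj`. -/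
def IsDP {X : Type*} {Y : Type*} (Adj : X → X → Prop) (M : X → PMF Y) (ε δ : ℝ) : Prop :=
  ∀ x x', Adj x x' → ∀ S : Set Y,
    (M x).toOuterMeasure S ≤
      ENNReal.ofReal (Real.exp ε) * (M x').toOuterMeasure S + ENNReal.ofReal δ

section AuxDP

open Real Complex


lemma sumGauss_summable {t : ℝ} (ht : 0 < t) (c : ℝ) :
    Summable fun n : ℤ ↦ Real.exp (-t * ((n : ℝ) - c) ^ 2) := by
  have h := (HurwitzZeta.hasSum_int_evenKernel (-c) (div_pos ht Real.pi_pos)).summable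
  refine h.congr fun n => ?_
  congr 1
  have : Real.pi ≠ 0 := Real.pi_ne_zero
  field_simp
  ring

lemma theta_le {t : ℝ} (ht : 0 < t) (c : ℝ) :
    ∑' n : ℤ, Real.exp (-t * ((n : ℝ) - c) ^ 2) ≤ ∑' n : ℤ, Real.exp (-t * (n : ℝ) ^ 2) := by
  have hπ : (Real.pi : ℝ) ≠ 0 := Real.pi_ne_zero
  obtain ⟨a, ha_def⟩ : ∃ a : ℝ, a = t / π := ⟨_, rfl⟩
  obtain ⟨b, hb_def⟩ : ∃ b : ℝ, b = t * c / π := ⟨_, rfl⟩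
  obtain ⟨c', hc'_def⟩ : ∃ c' : ℝ, c' = π * b / t := ⟨_, rfl⟩
  have ha : 0 < a := by rw [ha_def]; exact div_pos ht Real.pi_pos
  have hπa : π * a = t := by rw [ha_def]; field_simp
  have hπb : π * b = t * c := by rw [hb_def]; field_simp
  have hc' : t * c' = π * b := by rw [hc'_def]; field_simp
  have hπab : π / a * b ^ 2 = t * c ^ 2 := by
    have h2 : π * (π * b ^ 2) = π * (t * c ^ 2 * a) := by
      linear_combination (π * b + t * c) * hπb - t * c ^ 2 * hπa
    have h3 := mul_left_cancel₀ hπ h2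
    rw [div_mul_eq_mul_div, div_eq_iff ha.ne']
    linarith [h3]
  have key := Complex.tsum_exp_neg_quadratic (a := (a : ℂ)) (by simpa using ha) (b : ℂ)
  have hreal : ∀ n : ℤ, Complex.exp (-π * (a:ℂ) * n ^ 2 + 2 * π * (b:ℂ) * n) =
      ((Real.exp (-π * a * n ^ 2 + 2 * π * b * n) : ℝ) : ℂ) := by
    intro n
    rw [Complex.ofReal_exp]
    congr 1
    push_cast
    ring
  have hsum1 : Summable fun n : ℤ ↦ Real.exp (-π * a * (n : ℝ) ^ 2 + 2 * π * b * n) := by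
    have h := (sumGauss_summable ht c').mul_left (Real.exp (t * c' ^ 2))
    refine h.congr fun n => ?_
    rw [← Real.exp_add]
    congr 1
    linear_combination (n : ℝ) ^ 2 * hπa + 2 * (n : ℝ) * hc'
  have hLHS : (∑' n : ℤ, Real.exp (-t * ((n : ℝ) - c) ^ 2)) =
      Real.exp (-t * c ^ 2) * ∑' n : ℤ, Real.exp (-π * a * (n : ℝ) ^ 2 + 2 * π * b * n) := by
    rw [← tsum_mul_left]
    congr 1; funext n
    rw [← Real.exp_add]
    congr 1
    linear_combination (n : ℝ) ^ 2 * hπa - 2 * (n : ℝ) * hπb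
  have hnorm : ∀ n : ℤ, ‖Complex.exp (-π / a * ((n : ℂ) + I * b) ^ 2)‖ =
      Real.exp (π / a * b ^ 2) * Real.exp (-(π / a) * (n : ℝ) ^ 2) := by
    intro n
    rw [Complex.norm_exp, ← Real.exp_add]
    congr 1
    have h2 : -(π:ℂ) / (a:ℂ) = ((-π / a : ℝ) : ℂ) := by push_cast; ring
    rw [h2, Complex.re_ofReal_mul]
    have h3 : ((((n:ℤ):ℂ) + I * (b:ℂ)) ^ 2).re = (n : ℝ) ^ 2 - b ^ 2 := by
      simp [pow_two, Complex.add_re, Complex.mul_re, Complex.add_im, Complex.mul_im]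
    rw [h3]
    ring
  have hsum2 : Summable fun n : ℤ ↦
      Real.exp (π / a * b ^ 2) * Real.exp (-(π / a) * (n : ℝ) ^ 2) := by
    apply Summable.mul_left
    have h := sumGauss_summable (div_pos Real.pi_pos ha) (0 : ℝ)
    refine h.congr fun n => by norm_num
  have hsumnorm : Summable fun n : ℤ ↦ ‖Complex.exp (-π / a * ((n : ℂ) + I * b) ^ 2)‖ :=
    hsum2.congr fun n => (hnorm n).symm
  have hnorm_a : ‖(1 / (a : ℂ) ^ (1 / 2 : ℂ) : ℂ)‖ = 1 / a ^ (1 / 2 : ℝ) := by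
    rw [norm_div, norm_one]
    congr 1
    rw [show (1 / 2 : ℂ) = ((1 / 2 : ℝ) : ℂ) by norm_num, ← Complex.ofReal_cpow ha.le]
    rw [Complex.norm_real, Real.norm_eq_abs, _root_.abs_of_nonneg (Real.rpow_nonneg ha.le _)]
  have hRHS : (∑' n : ℤ, Real.exp (-t * (n : ℝ) ^ 2)) =
      1 / a ^ (1 / 2 : ℝ) * ∑' n : ℤ, Real.exp (-π / a * (n : ℝ) ^ 2) := by
    rw [← Real.tsum_exp_neg_mul_int_sq ha]
    refine tsum_congr fun n => ?_
    congr 1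
    linear_combination (n : ℝ) ^ 2 * hπa
  have hmain : (∑' n : ℤ, Real.exp (-π * a * (n : ℝ) ^ 2 + 2 * π * b * n)) ≤
      1 / a ^ (1 / 2 : ℝ) *
        (Real.exp (π / a * b ^ 2) * ∑' n : ℤ, Real.exp (-(π / a) * (n : ℝ) ^ 2)) := by
    have h0 : (∑' n : ℤ, Real.exp (-π * a * (n : ℝ) ^ 2 + 2 * π * b * n)) =
        ‖∑' n : ℤ, Complex.exp (-π * (a:ℂ) * n ^ 2 + 2 * π * (b:ℂ) * n)‖ := by
      have h4 : (∑' n : ℤ, Complex.exp (-π * (a:ℂ) * n ^ 2 + 2 * π * (b:ℂ) * n)) =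
          ((∑' n : ℤ, Real.exp (-π * a * (n : ℝ) ^ 2 + 2 * π * b * n) : ℝ) : ℂ) := by
        rw [Complex.ofReal_tsum]
        exact tsum_congr fun n => hreal n
      rw [h4, Complex.norm_real, Real.norm_eq_abs]
      exact (_root_.abs_of_nonneg (tsum_nonneg fun n => (Real.exp_pos _).le)).symm
    rw [h0, key, norm_mul, hnorm_a]
    refine mul_le_mul_of_nonneg_left ?_ (by positivity)
    calc ‖∑' n : ℤ, Complex.exp (-π / a * ((n : ℂ) + I * b) ^ 2)‖
        ≤ ∑' n : ℤ, ‖Complex.exp (-π / a * ((n : ℂ) + I * b) ^ 2)‖ :=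
          norm_tsum_le_tsum_norm hsumnorm
      _ = Real.exp (π / a * b ^ 2) * ∑' n : ℤ, Real.exp (-(π / a) * (n : ℝ) ^ 2) := by
          rw [← tsum_mul_left]
          exact tsum_congr hnorm
  have hneg : (∑' n : ℤ, Real.exp (-(π / a) * (n : ℝ) ^ 2)) =
      ∑' n : ℤ, Real.exp (-π / a * (n : ℝ) ^ 2) := by
    refine tsum_congr fun n => ?_
    rw [neg_div]
  calc (∑' n : ℤ, Real.exp (-t * ((n : ℝ) - c) ^ 2))
      = Real.exp (-t * c ^ 2) * ∑' n : ℤ, Real.exp (-π * a * (n : ℝ) ^ 2 + 2 * π * b * n) :=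
        hLHS
    _ ≤ Real.exp (-t * c ^ 2) * (1 / a ^ (1 / 2 : ℝ) *
        (Real.exp (π / a * b ^ 2) * ∑' n : ℤ, Real.exp (-(π / a) * (n : ℝ) ^ 2))) :=
        mul_le_mul_of_nonneg_left hmain (Real.exp_pos _).le
    _ = ∑' n : ℤ, Real.exp (-t * (n : ℝ) ^ 2) := by
        rw [hRHS, hπab, hneg]
        rw [show Real.exp (-t * c ^ 2) * (1 / a ^ (1 / 2 : ℝ) *
          (Real.exp (t * c ^ 2) * ∑' n : ℤ, Real.exp (-π / a * (n : ℝ) ^ 2))) =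
          (Real.exp (-t * c ^ 2) * Real.exp (t * c ^ 2)) *
          (1 / a ^ (1 / 2 : ℝ) * ∑' n : ℤ, Real.exp (-π / a * (n : ℝ) ^ 2)) from by ring]
        rw [← Real.exp_add, show -t * c ^ 2 + t * c ^ 2 = 0 from by ring, Real.exp_zero, one_mul]

lemma tsum_pi_prod : ∀ {d : ℕ} (f : Fin d → ℤ → ℝ≥0∞),
    ∑' z : Fin d → ℤ, ∏ i, f i (z i) = ∏ i, ∑' n, f i n := by
  intro d
  induction d with
  | zero =>
    intro f
    haveI : Unique (Fin 0 → ℤ) := ⟨⟨fun i => i.elim0⟩, fun x => funext fun i => i.elim0⟩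
    rw [tsum_eq_single (default : Fin 0 → ℤ) fun b' hb' =>
      absurd (Subsingleton.elim b' default) hb']
    simp
  | succ n ih =>
    intro f
    rw [← (Fin.consEquiv (fun _ : Fin (n+1) => ℤ)).tsum_eq (fun z => ∏ i, f i (z i))]
    have hterm : ∀ p : ℤ × (Fin n → ℤ),
        (∏ i, f i ((Fin.consEquiv (fun _ : Fin (n+1) => ℤ)) p i)) =
          f 0 p.1 * ∏ i : Fin n, f i.succ (p.2 i) := by
      intro p
      rw [Fin.prod_univ_succ]
      simp [Fin.consEquiv]
    calc (∑' p : ℤ × (Fin n → ℤ), ∏ i, f i ((Fin.consEquiv (fun _ : Fin (n+1) => ℤ)) p i))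
        = ∑' (a : ℤ) (b : Fin n → ℤ), f 0 a * ∏ i : Fin n, f i.succ (b i) := by
          rw [ENNReal.tsum_prod']
          exact tsum_congr fun a => tsum_congr fun b => hterm (a, b)
      _ = (∑' a : ℤ, f 0 a) * ∏ i : Fin n, ∑' m, f i.succ m := by
          rw [← ih fun i => f i.succ, ← ENNReal.tsum_mul_right]
          exact tsum_congr fun a => ENNReal.tsum_mul_left
      _ = ∏ i, ∑' n, f i n := by rw [Fin.prod_univ_succ]


lemma gauss_eq {σ2 : ℝ} (hσ2 : 0 < σ2) (n : ℤ) :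
    Real.exp (-(n : ℝ) ^ 2 / (2 * σ2)) = Real.exp (-(1 / (2 * σ2)) * ((n : ℝ) - 0) ^ 2) := by
  congr 1
  field_simp
  ring

lemma explin_eq {σ2 : ℝ} (hσ2 : 0 < σ2) (β : ℝ) (n : ℤ) :
    Real.exp (β * n) * Real.exp (-(n : ℝ) ^ 2 / (2 * σ2)) =
      Real.exp (β ^ 2 * σ2 / 2) * Real.exp (-(1 / (2 * σ2)) * ((n : ℝ) - β * σ2) ^ 2) := by
  rw [← Real.exp_add, ← Real.exp_add]
  congr 1
  field_simp
  ring

lemma explin_summable {σ2 : ℝ} (hσ2 : 0 < σ2) (β : ℝ) :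
    Summable fun n : ℤ ↦ Real.exp (β * n) * Real.exp (-(n : ℝ) ^ 2 / (2 * σ2)) := by
  have h := (sumGauss_summable (t := 1 / (2 * σ2)) (by positivity) (β * σ2)).mul_left
    (Real.exp (β ^ 2 * σ2 / 2))
  exact h.congr fun n => (explin_eq hσ2 β n).symm

lemma gauss_summable {σ2 : ℝ} (hσ2 : 0 < σ2) :
    Summable fun n : ℤ ↦ Real.exp (-(n : ℝ) ^ 2 / (2 * σ2)) := by
  have h := sumGauss_summable (t := 1 / (2 * σ2)) (by positivity) 0
  exact h.congr fun n => (gauss_eq hσ2 n).symm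

lemma mgf_le {σ2 : ℝ} (hσ2 : 0 < σ2) (β : ℝ) :
    ∑' n : ℤ, Real.exp (β * n) * Real.exp (-(n : ℝ) ^ 2 / (2 * σ2)) ≤
      Real.exp (β ^ 2 * σ2 / 2) * ∑' n : ℤ, Real.exp (-(n : ℝ) ^ 2 / (2 * σ2)) := by
  calc ∑' n : ℤ, Real.exp (β * n) * Real.exp (-(n : ℝ) ^ 2 / (2 * σ2))
      = Real.exp (β ^ 2 * σ2 / 2) *
        ∑' n : ℤ, Real.exp (-(1 / (2 * σ2)) * ((n : ℝ) - β * σ2) ^ 2) := by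
        rw [← tsum_mul_left]
        exact tsum_congr fun n => explin_eq hσ2 β n
    _ ≤ Real.exp (β ^ 2 * σ2 / 2) * ∑' n : ℤ, Real.exp (-(1 / (2 * σ2)) * (n : ℝ) ^ 2) :=
        mul_le_mul_of_nonneg_left (theta_le (by positivity) _) (Real.exp_pos _).le
    _ = Real.exp (β ^ 2 * σ2 / 2) * ∑' n : ℤ, Real.exp (-(n : ℝ) ^ 2 / (2 * σ2)) := by
        congr 1
        refine tsum_congr fun n => ?_
        rw [gauss_eq hσ2 n, sub_zero]

/-- Per-coordinate Chernoff-type bound. -/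
lemma coord_bound {σ lam : ℝ} (hσ2 : 0 < σ ^ 2) (hlam : 0 ≤ lam) (v : ℤ) (hv : ((v : ℝ)) ^ 2 ≤ 1) :
    ∑' k : ℤ, ENNReal.ofReal
        ((Real.exp (-(k : ℝ) ^ 2 / (2 * σ ^ 2)) / ∑' n : ℤ, Real.exp (-(n : ℝ) ^ 2 / (2 * σ ^ 2))) *
          Real.exp (lam * (((k : ℝ) - v) ^ 2 - (k : ℝ) ^ 2) / (2 * σ ^ 2))) ≤
      ENNReal.ofReal (Real.exp ((lam + lam ^ 2) / (2 * σ ^ 2))) := by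
  set g : ℤ → ℝ := fun n => Real.exp (-(n : ℝ) ^ 2 / (2 * σ ^ 2)) with hg
  set Z : ℝ := ∑' n : ℤ, g n with hZ
  have hZpos : 0 < Z := Summable.tsum_pos (gauss_summable hσ2) (fun n => (Real.exp_pos _).le) 0
    (Real.exp_pos _)
  set β : ℝ := -lam * v / σ ^ 2 with hβ
  have hterm : ∀ k : ℤ, (g k / Z) * Real.exp (lam * (((k : ℝ) - v) ^ 2 - (k : ℝ) ^ 2) / (2 * σ ^ 2))
      = (Real.exp (lam * (v : ℝ) ^ 2 / (2 * σ ^ 2)) / Z) * (Real.exp (β * k) * g k) := by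
    intro k
    have lhs_eq : (g k / Z) * Real.exp (lam * (((k : ℝ) - v) ^ 2 - (k : ℝ) ^ 2) / (2 * σ ^ 2)) =
        Real.exp (-(k : ℝ) ^ 2 / (2 * σ ^ 2) + lam * (((k : ℝ) - v) ^ 2 - (k : ℝ) ^ 2) / (2 * σ ^ 2)) / Z := by
      rw [Real.exp_add, hg]; ring
    have rhs_eq : (Real.exp (lam * (v : ℝ) ^ 2 / (2 * σ ^ 2)) / Z) * (Real.exp (β * k) * g k) =
        Real.exp (lam * (v : ℝ) ^ 2 / (2 * σ ^ 2) + (β * k + -(k : ℝ) ^ 2 / (2 * σ ^ 2))) / Z := by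
      rw [Real.exp_add, Real.exp_add, hg]; ring
    rw [lhs_eq, rhs_eq]
    congr 1
    rw [hβ]
    field_simp
    ring
  have hsummable : Summable fun k : ℤ =>
      (g k / Z) * Real.exp (lam * (((k : ℝ) - v) ^ 2 - (k : ℝ) ^ 2) / (2 * σ ^ 2)) := by
    refine Summable.congr (((explin_summable hσ2 β).mul_left _)) fun k => (hterm k).symm
  have hofreal : ∑' k : ℤ, ENNReal.ofReal
      ((g k / Z) * Real.exp (lam * (((k : ℝ) - v) ^ 2 - (k : ℝ) ^ 2) / (2 * σ ^ 2))) =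
      ENNReal.ofReal (∑' k : ℤ,
        (g k / Z) * Real.exp (lam * (((k : ℝ) - v) ^ 2 - (k : ℝ) ^ 2) / (2 * σ ^ 2))) := by
    rw [ENNReal.ofReal_tsum_of_nonneg (fun k => by positivity) hsummable]
  rw [hofreal]
  apply ENNReal.ofReal_le_ofReal
  calc (∑' k : ℤ, (g k / Z) * Real.exp (lam * (((k : ℝ) - v) ^ 2 - (k : ℝ) ^ 2) / (2 * σ ^ 2)))
      = (Real.exp (lam * (v : ℝ) ^ 2 / (2 * σ ^ 2)) / Z) * ∑' k : ℤ, Real.exp (β * k) * g k := by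
        rw [← tsum_mul_left]
        exact tsum_congr hterm
    _ ≤ (Real.exp (lam * (v : ℝ) ^ 2 / (2 * σ ^ 2)) / Z) *
        (Real.exp (β ^ 2 * σ ^ 2 / 2) * Z) :=
        mul_le_mul_of_nonneg_left (mgf_le hσ2 β) (by positivity)
    _ = Real.exp ((lam + lam ^ 2) * (v : ℝ) ^ 2 / (2 * σ ^ 2)) := by
        have h5 : Real.exp (lam * (v : ℝ) ^ 2 / (2 * σ ^ 2)) / Z *
            (Real.exp (β ^ 2 * σ ^ 2 / 2) * Z) =
            Real.exp (lam * (v : ℝ) ^ 2 / (2 * σ ^ 2)) * Real.exp (β ^ 2 * σ ^ 2 / 2) := by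
          field_simp
        rw [h5, ← Real.exp_add]
        congr 1
        rw [hβ]
        field_simp
    _ ≤ Real.exp ((lam + lam ^ 2) / (2 * σ ^ 2)) := by
        apply Real.exp_le_exp.mpr
        have h1 : 0 ≤ lam + lam ^ 2 := by positivity
        rw [div_le_div_iff₀ (by positivity) (by positivity)]
        nlinarith [mul_nonneg (mul_nonneg h1 (by positivity : (0:ℝ) ≤ 2 * σ ^ 2))
          (sub_nonneg.mpr hv)]

lemma core {d : ℕ} (hd : 1 ≤ d) (ε δ σ : ℝ) (hε : 0 < ε) (hδ0 : 0 < δ)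
    (hδ : δ ≤ Real.exp (-ε / 2)) (hσ : σ ^ 2 = 4 * (d : ℝ) * Real.log (1 / δ) / ε ^ 2)
    (G : PMF ℤ)
    (hG : ∀ x : ℤ, G x = ENNReal.ofReal (Real.exp (-(x : ℝ) ^ 2 / (2 * σ ^ 2)) /
        ∑' y : ℤ, Real.exp (-(y : ℝ) ^ 2 / (2 * σ ^ 2))))
    (s s' : Fin d → ℤ) (hv : ∀ i, ((s' i : ℝ) - (s i : ℝ)) ^ 2 ≤ 1)
    (S : Set (Fin d → ℤ)) :
    ∑' y : Fin d → ℤ, S.indicator (fun y => ∏ i, (G (y i - s i) : ℝ≥0∞)) y ≤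
      ENNReal.ofReal (Real.exp ε) *
        ∑' y : Fin d → ℤ, S.indicator (fun y => ∏ i, (G (y i - s' i) : ℝ≥0∞)) y +
      ENNReal.ofReal δ := by
  classical
  set L : ℝ := Real.log (1 / δ) with hLdef
  have hlogδ : Real.log δ = -L := by rw [hLdef, one_div, Real.log_inv, neg_neg]
  have hL : ε / 2 ≤ L := by
    have h1 : Real.log δ ≤ -ε / 2 := by
      calc Real.log δ ≤ Real.log (Real.exp (-ε / 2)) := Real.log_le_log hδ0 hδ
        _ = -ε / 2 := Real.log_exp _
    rw [hlogδ] at h1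
    linarith
  have hLpos : 0 < L := lt_of_lt_of_le (by positivity) hL
  have hdpos : (0 : ℝ) < d := by exact_mod_cast Nat.lt_of_lt_of_le Nat.zero_lt_one hd
  have hσ2 : 0 < σ ^ 2 := by
    rw [hσ]
    exact div_pos (mul_pos (mul_pos (by norm_num) hdpos) hLpos) (pow_pos hε 2)
  set g : ℤ → ℝ := fun n => Real.exp (-(n : ℝ) ^ 2 / (2 * σ ^ 2)) with hgdef
  set Z : ℝ := ∑' n : ℤ, g n with hZdef
  have hZpos : 0 < Z := Summable.tsum_pos (gauss_summable hσ2) (fun n => (Real.exp_pos _).le) 0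
    (Real.exp_pos _)
  have hGg : ∀ k : ℤ, G k = ENNReal.ofReal (g k / Z) := fun k => hG k
  set lam : ℝ := 2 * L / ε with hlamdef
  have hlam0 : 0 < lam := by positivity
  set F : (Fin d → ℤ) → ℝ≥0∞ := fun y => ∏ i, G (y i - s i) with hF
  set F' : (Fin d → ℤ) → ℝ≥0∞ := fun y => ∏ i, G (y i - s' i) with hF'
  have prod_eq : ∀ (r : Fin d → ℤ) (y : Fin d → ℤ),
      (∏ i, G (y i - r i)) = ENNReal.ofReal ((∏ i, g (y i - r i)) / Z ^ d) := by
    intro r y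
    calc (∏ i, G (y i - r i)) = ∏ i, ENNReal.ofReal (g (y i - r i) / Z) := by
          exact Finset.prod_congr rfl fun i _ => hGg _
      _ = ENNReal.ofReal (∏ i, (g (y i - r i) / Z)) :=
          (ENNReal.ofReal_prod_of_nonneg (fun i _ => by positivity)).symm
      _ = ENNReal.ofReal ((∏ i, g (y i - r i)) / Z ^ d) := by
          rw [Finset.prod_div_distrib, Finset.prod_const, Finset.card_univ, Fintype.card_fin]
  have hPexp : ∀ (r : Fin d → ℤ) (y : Fin d → ℤ),
      (∏ i, g (y i - r i)) = Real.exp (∑ i, -((y i : ℝ) - (r i : ℝ)) ^ 2 / (2 * σ ^ 2)) := by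
    intro r y
    rw [Real.exp_sum]
    refine Finset.prod_congr rfl fun i _ => ?_
    rw [hgdef]
    simp only
    congr 2
    push_cast
    ring
  set Good : Set (Fin d → ℤ) :=
    {y | (∏ i, g (y i - s i)) ≤ Real.exp ε * ∏ i, g (y i - s' i)} with hGood
  -- Step A: pointwise bound on the good part
  have hA : ∀ y, (S ∩ Good).indicator F y ≤ ENNReal.ofReal (Real.exp ε) * S.indicator F' y := by
    intro y
    by_cases hy : y ∈ S ∩ Good
    · rw [Set.indicator_of_mem hy, Set.indicator_of_mem hy.1, hF, hF']
      simp only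
      rw [prod_eq s y, prod_eq s' y, ← ENNReal.ofReal_mul (Real.exp_nonneg _)]
      apply ENNReal.ofReal_le_ofReal
      have hy2 : (∏ i, g (y i - s i)) ≤ Real.exp ε * ∏ i, g (y i - s' i) := hy.2
      calc (∏ i, g (y i - s i)) / Z ^ d ≤ (Real.exp ε * ∏ i, g (y i - s' i)) / Z ^ d := by
            gcongr
        _ = Real.exp ε * ((∏ i, g (y i - s' i)) / Z ^ d) := mul_div_assoc _ _ _
    · rw [Set.indicator_of_notMem hy]
      exact zero_le
  -- the coordinate factors
  set f : Fin d → ℤ → ℝ≥0∞ := fun i m => ENNReal.ofReal ((g (m - s i) / Z) *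
    Real.exp (lam * (((m : ℝ) - (s' i : ℝ)) ^ 2 - ((m : ℝ) - (s i : ℝ)) ^ 2) / (2 * σ ^ 2)))
    with hf
  have hcoord : ∀ i, (∑' m : ℤ, f i m) ≤
      ENNReal.ofReal (Real.exp ((lam + lam ^ 2) / (2 * σ ^ 2))) := by
    intro i
    have hb := coord_bound (σ := σ) (lam := lam) hσ2 hlam0.le (s' i - s i)
      (by push_cast; exact hv i)
    rw [← (Equiv.addRight (s i)).tsum_eq (f i)]
    refine le_trans (le_of_eq (tsum_congr fun k => ?_)) hb
    show f i (k + s i) = _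
    rw [hf]
    simp only
    rw [show k + s i - s i = k from add_sub_cancel_right k (s i)]
    congr 3
    push_cast
    ring
  -- Step B: pointwise bound on the bad part
  have hpt : ∀ y, (Goodᶜ).indicator F y ≤
      ENNReal.ofReal (Real.exp (-(lam * ε))) * ∏ i, f i (y i) := by
    intro y
    by_cases hy : y ∈ Goodᶜ
    · rw [Set.indicator_of_mem hy]
      have hbad : Real.exp ε * ∏ i, g (y i - s' i) < ∏ i, g (y i - s i) := not_le.mp hy
      set D : ℝ := ∑ i, (((y i : ℝ) - (s' i : ℝ)) ^ 2 - ((y i : ℝ) - (s i : ℝ)) ^ 2) with hD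
      have hsum_exp : (∑ i, lam * (((y i : ℝ) - (s' i : ℝ)) ^ 2 -
          ((y i : ℝ) - (s i : ℝ)) ^ 2) / (2 * σ ^ 2)) = lam * D / (2 * σ ^ 2) := by
        rw [hD, Finset.mul_sum, Finset.sum_div]
      have hεD : ε < D / (2 * σ ^ 2) := by
        have h1 := hPexp s y
        have h2 := hPexp s' y
        rw [h1, h2, ← Real.exp_add] at hbad
        have h3 := Real.exp_lt_exp.mp hbad
        have h4 : (∑ i, -((y i : ℝ) - (s i : ℝ)) ^ 2 / (2 * σ ^ 2)) =
            -((∑ i, ((y i : ℝ) - (s i : ℝ)) ^ 2) / (2 * σ ^ 2)) := by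
          simp only [neg_div]
          rw [Finset.sum_neg_distrib, Finset.sum_div]
        have h5 : (∑ i, -((y i : ℝ) - (s' i : ℝ)) ^ 2 / (2 * σ ^ 2)) =
            -((∑ i, ((y i : ℝ) - (s' i : ℝ)) ^ 2) / (2 * σ ^ 2)) := by
          simp only [neg_div]
          rw [Finset.sum_neg_distrib, Finset.sum_div]
        rw [h4, h5] at h3
        have hDeq : D = (∑ i, ((y i : ℝ) - (s' i : ℝ)) ^ 2) -
            (∑ i, ((y i : ℝ) - (s i : ℝ)) ^ 2) := by
          rw [hD, Finset.sum_sub_distrib]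
        rw [hDeq, sub_div]
        linarith
      rw [hF]
      simp only
      rw [prod_eq s y]
      have hprod_f : (∏ i, f i (y i)) = ENNReal.ofReal ((∏ i, g (y i - s i)) / Z ^ d *
          Real.exp (lam * D / (2 * σ ^ 2))) := by
        rw [hf]
        simp only
        rw [← ENNReal.ofReal_prod_of_nonneg (fun i _ => by positivity)]
        congr 1
        rw [Finset.prod_mul_distrib, ← Real.exp_sum, hsum_exp, Finset.prod_div_distrib,
          Finset.prod_const, Finset.card_univ, Fintype.card_fin]
      rw [hprod_f, ← ENNReal.ofReal_mul (Real.exp_nonneg _)]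
      apply ENNReal.ofReal_le_ofReal
      have hone : (1 : ℝ) ≤ Real.exp (-(lam * ε)) * Real.exp (lam * D / (2 * σ ^ 2)) := by
        rw [← Real.exp_add]
        apply Real.one_le_exp
        have hmul : lam * ε < lam * (D / (2 * σ ^ 2)) := mul_lt_mul_of_pos_left hεD hlam0
        rw [mul_div_assoc]
        linarith
      calc (∏ i, g (y i - s i)) / Z ^ d = (∏ i, g (y i - s i)) / Z ^ d * 1 := (mul_one _).symm
        _ ≤ (∏ i, g (y i - s i)) / Z ^ d *
            (Real.exp (-(lam * ε)) * Real.exp (lam * D / (2 * σ ^ 2))) := by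
            apply mul_le_mul_of_nonneg_left hone
            positivity
        _ = Real.exp (-(lam * ε)) *
            ((∏ i, g (y i - s i)) / Z ^ d * Real.exp (lam * D / (2 * σ ^ 2))) := by ring
    · rw [Set.indicator_of_notMem hy]
      exact zero_le
  -- Step B: total bad mass
  have hB : (∑' y : Fin d → ℤ, (Goodᶜ).indicator F y) ≤ ENNReal.ofReal δ := by
    have hnum : -(lam * ε) + (d : ℝ) * ((lam + lam ^ 2) / (2 * σ ^ 2)) ≤ Real.log δ := by
      have h2σ : 2 * σ ^ 2 = 8 * (d : ℝ) * L / ε ^ 2 := by rw [hσ]; ring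
      have hq : (d : ℝ) * ((lam + lam ^ 2) / (2 * σ ^ 2)) = ε / 4 + L / 2 := by
        rw [h2σ, hlamdef]
        field_simp
        ring
      have hlε : lam * ε = 2 * L := by rw [hlamdef]; field_simp
      rw [hq, hlε, hlogδ]
      linarith
    calc (∑' y : Fin d → ℤ, (Goodᶜ).indicator F y)
        ≤ ∑' y : Fin d → ℤ, (ENNReal.ofReal (Real.exp (-(lam * ε))) * ∏ i, f i (y i)) :=
          ENNReal.tsum_le_tsum hpt
      _ = ENNReal.ofReal (Real.exp (-(lam * ε))) * ∑' y : Fin d → ℤ, ∏ i, f i (y i) :=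
          ENNReal.tsum_mul_left
      _ = ENNReal.ofReal (Real.exp (-(lam * ε))) * ∏ i, ∑' m : ℤ, f i m := by
          rw [tsum_pi_prod f]
      _ ≤ ENNReal.ofReal (Real.exp (-(lam * ε))) *
          ∏ _i : Fin d, ENNReal.ofReal (Real.exp ((lam + lam ^ 2) / (2 * σ ^ 2))) :=
          mul_le_mul_right (Finset.prod_le_prod' fun i _ => hcoord i) _
      _ = ENNReal.ofReal (Real.exp (-(lam * ε) +
          (d : ℝ) * ((lam + lam ^ 2) / (2 * σ ^ 2)))) := by
          rw [Finset.prod_const, Finset.card_univ, Fintype.card_fin,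
            ← ENNReal.ofReal_pow (Real.exp_nonneg _), ← Real.exp_nat_mul,
            ← ENNReal.ofReal_mul (Real.exp_nonneg _), ← Real.exp_add]
      _ ≤ ENNReal.ofReal δ := by
          apply ENNReal.ofReal_le_ofReal
          rw [← Real.exp_log hδ0]
          exact Real.exp_le_exp.mpr hnum
  -- assemble
  have hsplit : ∀ y, S.indicator F y =
      (S ∩ Good).indicator F y + (S ∩ Goodᶜ).indicator F y := by
    intro y
    by_cases hS : y ∈ S
    · by_cases hGd : y ∈ Good
      · rw [Set.indicator_of_mem hS, Set.indicator_of_mem (Set.mem_inter hS hGd),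
          Set.indicator_of_notMem (fun h => h.2 hGd), add_zero]
      · rw [Set.indicator_of_mem hS, Set.indicator_of_notMem (fun h => hGd h.2),
          Set.indicator_of_mem (Set.mem_inter hS (Set.mem_compl hGd)), zero_add]
    · rw [Set.indicator_of_notMem hS, Set.indicator_of_notMem (fun h => hS h.1),
        Set.indicator_of_notMem (fun h => hS h.1), add_zero]
  calc (∑' y : Fin d → ℤ, S.indicator F y)
      = ∑' y : Fin d → ℤ, ((S ∩ Good).indicator F y + (S ∩ Goodᶜ).indicator F y) :=
        tsum_congr hsplit
    _ = (∑' y : Fin d → ℤ, (S ∩ Good).indicator F y) +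
        ∑' y : Fin d → ℤ, (S ∩ Goodᶜ).indicator F y := ENNReal.tsum_add
    _ ≤ (ENNReal.ofReal (Real.exp ε) * ∑' y : Fin d → ℤ, S.indicator F' y) +
        ENNReal.ofReal δ := by
        apply add_le_add
        · calc (∑' y : Fin d → ℤ, (S ∩ Good).indicator F y)
              ≤ ∑' y : Fin d → ℤ, (ENNReal.ofReal (Real.exp ε) * S.indicator F' y) :=
                ENNReal.tsum_le_tsum hA
            _ = _ := ENNReal.tsum_mul_left
        · calc (∑' y : Fin d → ℤ, (S ∩ Goodᶜ).indicator F y)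
              ≤ ∑' y : Fin d → ℤ, (Goodᶜ).indicator F y :=
                ENNReal.tsum_le_tsum fun y => Set.indicator_le_indicator_of_subset
                  Set.inter_subset_right (fun _ => zero_le) y
            _ ≤ _ := hB

lemma dbSum_insert {d : ℕ} (a : Fin d → Bool) (l₁ l₂ : List (Fin d → Bool)) (i : Fin d) :
    dbSum (l₁ ++ a :: l₂) i = dbSum (l₁ ++ l₂) i + (if a i then 1 else 0) := by
  simp [dbSum, List.map_append, List.sum_append]
  ring

end AuxDP

/-- The discrete Gaussian mechanism `M x = sum x + Y`, with the coordinates of `Y`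
i.i.d. `N_ℤ(σ²)` for `σ² = 4 d ln(1/δ) / ε²`, is `(ε, δ)`-DP with respect to
insert-delete adjacency, provided `0 < δ ≤ e^{-ε/2}`. -/
theorem stmt3 (d : ℕ) (hd : 1 ≤ d) (ε δ σ : ℝ) (hε : 0 < ε)
    (hδ0 : 0 < δ) (hδ : δ ≤ Real.exp (-ε / 2))
    (hσ : σ ^ 2 = 4 * (d : ℝ) * Real.log (1 / δ) / ε ^ 2)
    (G : PMF ℤ)
    (hG : ∀ x : ℤ, G x = ENNReal.ofReal
      (Real.exp (-(x : ℝ) ^ 2 / (2 * σ ^ 2)) /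
        ∑' y : ℤ, Real.exp (-(y : ℝ) ^ 2 / (2 * σ ^ 2))))
    (M : List (Fin d → Bool) → PMF (Fin d → ℤ))
    (hM : ∀ x y, M x y = ∏ i, G (y i - dbSum x i)) :
    IsDP Adjacent M ε δ := by
  intro x x' hadj S
  rw [PMF.toOuterMeasure_apply, PMF.toOuterMeasure_apply]
  have hMx : ⇑(M x) = fun y => ∏ i, G (y i - dbSum x i) := funext (hM x)
  have hMx' : ⇑(M x') = fun y => ∏ i, G (y i - dbSum x' i) := funext (hM x')
  rw [hMx, hMx']
  have hv : ∀ i, ((dbSum x' i : ℝ) - (dbSum x i : ℝ)) ^ 2 ≤ 1 := by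
    intro i
    rcases hadj with ⟨a, l₁, l₂, h1, h2⟩ | ⟨a, l₁, l₂, h1, h2⟩
    · rw [h1, h2, dbSum_insert]
      rcases Bool.dichotomy (a i) with h | h <;> simp [h]
    · rw [h1, h2, dbSum_insert]
      rcases Bool.dichotomy (a i) with h | h <;> simp [h]
  exact core hd ε δ σ hε hδ0 hδ hσ G hG (dbSum x) (dbSum x') hv S
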